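/- Let q = 2^r with r ≥ 1, λ the canonical additive character of F_q (λ(x) = (-1)^{tr(x)} with tr the absolute trace to F_2), and β ∈ F_q*. Then the sum over α ∈ F_q \ {0,1} of λ(β/(α²+α)) equals K(λ;β) − 1, where K(λ;β) = Σ_{x ∈ F_q*} λ(x + βx⁻¹) is the Kloosterman sum. -/

import Mathlib

open Finset
open scoped Classical

noncomputable instance (p n : ℕ) [Fact p.Prime] : Fintype (GaloisField p n) :=
  Fintype.ofFinite _

/-- The canonical additive character of `𝔽_{2^r}`, valued in `{±1} ⊆ ℤ`:
`λ(x) = (-1)^{tr(x)}` where `tr` is the absolute trace to `𝔽₂`. -/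
noncomputable def lam (r : ℕ) (x : GaloisField 2 r) : ℤ :=
  if Algebra.trace (ZMod 2) (GaloisField 2 r) x = 0 then 1 else -1

section aux

variable {r : ℕ}

local notation "F" => GaloisField 2 r
local notation "tr" => Algebra.trace (ZMod 2) (GaloisField 2 r)

lemma lam_add (a b : F) : lam r (a + b) = lam r a * lam r b := by
  unfold lam
  rw [map_add]
  have h : ∀ c : ZMod 2, c = 0 ∨ c = 1 := by decide
  have h2 : (1 + 1 : ZMod 2) = 0 := by decide
  rcases h (tr a) with ha | ha <;> rcases h (tr b) with hb | hb <;>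
    simp [ha, hb, h2]

lemma tr_sq (x : F) : tr (x ^ 2) = tr x := by
  have hc : ∀ c : ZMod 2, c ^ 2 = c := by decide
  let e : F ≃ₐ[ZMod 2] F :=
    { frobeniusEquiv F 2 with
      commutes' := fun c => by
        show frobenius F 2 _ = _
        rw [frobenius_def, ← map_pow, hc] }
  have h := Algebra.trace_eq_of_algEquiv e x
  have he : e x = x ^ 2 := rfl
  rw [he] at h
  exact h

lemma tr_phi (α : F) : tr (α ^ 2 + α) = 0 := by
  rw [map_add, tr_sq]
  exact CharTwo.add_self_eq_zero _

lemma sum_lam_eq_zero : ∑ x : F, lam r x = 0 := by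
  obtain ⟨u, hu⟩ : ∃ u : F, tr u ≠ 0 := by
    by_contra h
    push_neg at h
    exact Algebra.trace_ne_zero (ZMod 2) F (LinearMap.ext h)
  have hlamu : lam r u = -1 := by unfold lam; rw [if_neg hu]
  have key : ∑ x : F, lam r (x + u) = ∑ x : F, lam r x :=
    Fintype.sum_equiv (Equiv.addRight u) _ _ (fun x => rfl)
  have : ∑ x : F, lam r x = -∑ x : F, lam r x := by
    calc ∑ x : F, lam r x = ∑ x : F, lam r (x + u) := key.symm
    _ = ∑ x : F, lam r x * lam r u := by
        refine Fintype.sum_congr _ _ fun x => ?_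
        rw [lam_add]
    _ = -∑ x : F, lam r x := by simp [hlamu, mul_neg_one]
  linarith

lemma fiber_univ (y α₀ : F) (h0 : α₀ ^ 2 + α₀ = y) :
    (univ.filter fun α : F => α ^ 2 + α = y) = {α₀, α₀ + 1} := by
  ext α
  simp only [mem_filter, mem_univ, true_and, mem_insert, mem_singleton]
  constructor
  · intro hαy
    have key : (α + α₀) * ((α + α₀) + 1) = 0 := by
      linear_combination hαy - h0 + (α * α₀ + α₀^2 + α₀) * (CharTwo.two_eq_zero (R := F))
    rcases mul_eq_zero.1 key with h | h
    · left
      have := CharTwo.add_eq_iff_eq_add.mp h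
      simpa using this
    · right
      linear_combination h - (α₀ + 1) * CharTwo.two_eq_zero (R := F)
  · rintro (rfl | rfl)
    · exact h0
    · linear_combination h0 + (α₀ + 1) * CharTwo.two_eq_zero (R := F)


lemma exists_root (y : F) (hy : Algebra.trace (ZMod 2) (GaloisField 2 r) y = 0) :
    ∃ α : F, α ^ 2 + α = y := by
  classical
  set I : Finset F := univ.image (fun α : F => α ^ 2 + α) with hI
  set T0 : Finset F := univ.filter (fun x : F => tr x = 0) with hT0
  have hsub : I ⊆ T0 := by
    intro x hx
    simp only [hI, mem_image] at hx
    obtain ⟨α, -, rfl⟩ := hx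
    simp [hT0, tr_phi]
  obtain ⟨u, hu⟩ : ∃ u : F, tr u ≠ 0 := by
    by_contra h; push_neg at h
    exact Algebra.trace_ne_zero (ZMod 2) F (LinearMap.ext h)
  have hone : ∀ c : ZMod 2, c ≠ 0 → c = 1 := by decide
  have h11 : (1 + 1 : ZMod 2) = 0 := by decide
  have hcard01 : T0.card = (univ.filter (fun x : F => ¬ tr x = 0)).card := by
    refine Finset.card_nbij' (fun x => x + u) (fun x => x + u) ?_ ?_ ?_ ?_
    · intro a ha
      simp only [hT0, mem_coe, mem_filter, mem_univ, true_and] at ha ⊢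
      rw [map_add, ha, zero_add]
      exact hu
    · intro a ha
      simp only [hT0, mem_coe, mem_filter, mem_univ, true_and] at ha ⊢
      rw [map_add, hone _ ha, hone _ hu, h11]
    · intro a _
      simp [add_assoc, CharTwo.add_self_eq_zero]
    · intro a _
      simp [add_assoc, CharTwo.add_self_eq_zero]
  have hsum : T0.card + (univ.filter fun x : F => ¬ tr x = 0).card
      = (univ : Finset F).card := Finset.card_filter_add_card_filter_not _
  have hIcard : 2 * I.card = (univ : Finset F).card := by
    have hfib : (univ : Finset F).card = ∑ z ∈ I, (univ.filter fun α : F => α ^ 2 + α = z).card :=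
      Finset.card_eq_sum_card_fiberwise (fun x _ => mem_image_of_mem _ (mem_univ x))
    have h2 : ∀ z ∈ I, (univ.filter fun α : F => α ^ 2 + α = z).card = 2 := by
      intro z hz
      obtain ⟨α₀, -, h0⟩ := mem_image.1 hz
      rw [fiber_univ z α₀ h0, Finset.card_insert_of_notMem, Finset.card_singleton]
      simp only [mem_singleton]
      intro h
      exact one_ne_zero (by linear_combination -h : (1 : F) = 0)
    rw [Finset.sum_congr rfl h2, Finset.sum_const, smul_eq_mul] at hfib
    omega
  have hIT : I = T0 := by
    refine Finset.eq_of_subset_of_card_le hsub ?_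
    have hle := Finset.card_le_card hsub
    omega
  have : y ∈ I := by
    rw [hIT, hT0]
    simp [hy]
  obtain ⟨α, -, hα⟩ := mem_image.1 this
  exact ⟨α, hα⟩

end aux

/-- The Kloosterman sum `K(λ;β) = Σ_{x ∈ 𝔽_q*} λ(x + β x⁻¹)`. -/
noncomputable def Kl (r : ℕ) (β : GaloisField 2 r) : ℤ :=
  ∑ x ∈ (Finset.univ \ {0} : Finset (GaloisField 2 r)), lam r (x + β * x⁻¹)

theorem stmt0 (r : ℕ) (hr : 1 ≤ r) (β : GaloisField 2 r) (hβ : β ≠ 0) :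
    ∑ α ∈ (Finset.univ \ {0, 1} : Finset (GaloisField 2 r)),
      lam r (β / (α ^ 2 + α)) = Kl r β - 1 := by
  classical
  set s0 := ((univ \ {0} : Finset (GaloisField 2 r))).filter
    (fun x => Algebra.trace (ZMod 2) (GaloisField 2 r) x = 0) with hs0
  set s1 := ((univ \ {0} : Finset (GaloisField 2 r))).filter
    (fun x => ¬ Algebra.trace (ZMod 2) (GaloisField 2 r) x = 0) with hs1
  set A := ∑ x ∈ s0, lam r (β * x⁻¹) with hA
  set B := ∑ x ∈ s1, lam r (β * x⁻¹) with hB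
  have h2z : (2 : GaloisField 2 r) = 0 := CharTwo.two_eq_zero
  -- Step 1: LHS = ∑ y ∈ s0, 2 * lam r (β / y)
  have maps : ∀ α ∈ (univ \ {0, 1} : Finset (GaloisField 2 r)), α ^ 2 + α ∈ s0 := by
    intro α hα
    simp only [mem_sdiff, mem_univ, true_and, mem_insert, mem_singleton, not_or] at hα
    obtain ⟨h0, h1⟩ := hα
    simp only [hs0, mem_filter, mem_sdiff, mem_univ, true_and, mem_singleton]
    refine ⟨?_, tr_phi α⟩
    have hfac : α ^ 2 + α = α * (α + 1) := by ring
    rw [hfac]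
    refine mul_ne_zero h0 (fun h => h1 ?_)
    linear_combination h - h2z
  have hLHS : ∑ α ∈ (univ \ {0, 1} : Finset (GaloisField 2 r)), lam r (β / (α ^ 2 + α))
      = ∑ y ∈ s0, 2 * lam r (β / y) := by
    rw [← Finset.sum_fiberwise_of_maps_to' maps (fun y => lam r (β / y))]
    refine Finset.sum_congr rfl fun y hy => ?_
    simp only [hs0, mem_filter, mem_sdiff, mem_univ, true_and, mem_singleton] at hy
    obtain ⟨hy0, hytr⟩ := hy
    obtain ⟨α₀, h0⟩ := exists_root y hytr
    have hfil : ((univ \ {0, 1} : Finset (GaloisField 2 r)).filter fun α => α ^ 2 + α = y)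
        = (univ.filter fun α : GaloisField 2 r => α ^ 2 + α = y) := by
      ext α
      simp only [mem_filter, mem_sdiff, mem_univ, true_and, mem_insert, mem_singleton, not_or]
      constructor
      · tauto
      · intro h
        refine ⟨⟨fun hα => hy0 ?_, fun hα => hy0 ?_⟩, h⟩
        · subst hα; linear_combination -h
        · subst hα; linear_combination h2z - h
    have hne : α₀ ≠ α₀ + 1 := fun h => one_ne_zero (by linear_combination -h : (1 : GaloisField 2 r) = 0)
    rw [hfil, fiber_univ y α₀ h0, Finset.sum_pair hne]
    ring
  -- Step 2: Kl r β = A - B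
  have e0 : ∀ x ∈ s0, lam r x * lam r (β * x⁻¹) = lam r (β * x⁻¹) := by
    intro x hx
    have := (mem_filter.1 hx).2
    simp [lam, this]
  have e1 : ∀ x ∈ s1, lam r x * lam r (β * x⁻¹) = -lam r (β * x⁻¹) := by
    intro x hx
    have h' := (mem_filter.1 hx).2
    unfold lam
    rw [if_neg h']
    by_cases h : Algebra.trace (ZMod 2) (GaloisField 2 r) (β * x⁻¹) = 0 <;> simp [h]
  have hKl : Kl r β = A - B := by
    unfold Kl
    calc ∑ x ∈ (univ \ {0} : Finset (GaloisField 2 r)), lam r (x + β * x⁻¹)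
        = ∑ x ∈ (univ \ {0} : Finset (GaloisField 2 r)), lam r x * lam r (β * x⁻¹) :=
          Finset.sum_congr rfl fun x _ => lam_add x _
      _ = (∑ x ∈ s0, lam r x * lam r (β * x⁻¹)) + ∑ x ∈ s1, lam r x * lam r (β * x⁻¹) :=
          (Finset.sum_filter_add_sum_filter_not _ _ _).symm
      _ = A - B := by
          rw [Finset.sum_congr rfl e0, Finset.sum_congr rfl e1, Finset.sum_neg_distrib]
          rw [hA, hB]; ring
  -- Step 3: A + B = -1
  have hAB : A + B = -1 := by
    have h1 : A + B = ∑ x ∈ (univ \ {0} : Finset (GaloisField 2 r)), lam r (β * x⁻¹) := by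
      rw [hA, hB]
      exact Finset.sum_filter_add_sum_filter_not _ _ _
    have h2 : ∑ x ∈ (univ \ {0} : Finset (GaloisField 2 r)), lam r (β * x⁻¹)
        = ∑ x ∈ (univ \ {0} : Finset (GaloisField 2 r)), lam r x := by
      refine Finset.sum_nbij' (fun x => β * x⁻¹) (fun x => β * x⁻¹) ?_ ?_ ?_ ?_ ?_
      · intro a ha
        simp only [mem_sdiff, mem_univ, true_and, mem_singleton] at ha ⊢
        exact mul_ne_zero hβ (inv_ne_zero ha)
      · intro a ha
        simp only [mem_sdiff, mem_univ, true_and, mem_singleton] at ha ⊢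
        exact mul_ne_zero hβ (inv_ne_zero ha)
      · intro a ha
        simp only [mem_sdiff, mem_univ, true_and, mem_singleton] at ha
        show β * (β * a⁻¹)⁻¹ = a
        rw [mul_inv, inv_inv, ← mul_assoc, mul_inv_cancel₀ hβ, one_mul]
      · intro a ha
        simp only [mem_sdiff, mem_univ, true_and, mem_singleton] at ha
        show β * (β * a⁻¹)⁻¹ = a
        rw [mul_inv, inv_inv, ← mul_assoc, mul_inv_cancel₀ hβ, one_mul]
      · intro a _
        rfl
    have h3 : ∑ x ∈ (univ \ {0} : Finset (GaloisField 2 r)), lam r x = -1 := by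
      have hsub : ({0} : Finset (GaloisField 2 r)) ⊆ univ := Finset.subset_univ _
      have h := Finset.sum_sdiff (f := lam r) hsub
      have hz : ∑ x ∈ ({0} : Finset (GaloisField 2 r)), lam r x = 1 := by simp [lam]
      have htot : ∑ x ∈ (univ : Finset (GaloisField 2 r)), lam r x = 0 := sum_lam_eq_zero
      rw [hz, htot] at h
      linarith
    rw [h1, h2, h3]
  -- Finale
  have h2A : ∑ y ∈ s0, 2 * lam r (β / y) = 2 * A := by
    rw [hA, Finset.mul_sum]
    exact Finset.sum_congr rfl fun y _ => by rw [div_eq_mul_inv]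
  rw [hLHS, h2A, hKl]
  linarith
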